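/- Let S be a proper sampling over [n] with probability matrix P (P_ij = Prob({i,j} ⊆ S)) and probability vector p (p_i = Prob(i ∈ S) > 0), and let ζ₁, …, ζ_n ∈ ℝ^d be fixed vectors with average ζ̄ = (1/n)Σ_{i=1}^n ζ_i. Then the variance of X = Σ_{i∈S} ζ_i/(n p_i) satisfies the exact identity E[‖X − ζ̄‖²] = (1/n²)·Σ_{i=1}^n Σ_{j=1}^n (P_ij − p_i p_j)·⟨ζ_i/p_i, ζ_j/p_j⟩. -/

import Mathlib

open scoped RealInnerProductSpace

/-- For a proper sampling `S` over `[n]` (modeled by a probability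
mass function `w` on subsets of `Fin n`) with probability matrix `P` and probability
vector `p`, and fixed vectors `ζ₁, …, ζ_n ∈ ℝ^d` with average `ζ̄`, the variance of
`X = Σ_{i∈S} ζ_i/(n p_i)` satisfies the exact identity
`E‖X − ζ̄‖² = (1/n²) Σᵢ Σⱼ (P_ij − p_i p_j) ⟨ζ_i/p_i, ζ_j/p_j⟩`. -/
theorem subsampled_estimator_variance_identity {n d : ℕ} (hn : 1 ≤ n)
    (w : Finset (Fin n) → ℝ) (hw : ∀ s, 0 ≤ w s)
    (hsum : ∑ s : Finset (Fin n), w s = 1)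
    (P : Matrix (Fin n) (Fin n) ℝ)
    (hP : ∀ i j, P i j = ∑ s : Finset (Fin n), if i ∈ s ∧ j ∈ s then w s else 0)
    (p : Fin n → ℝ)
    (hp : ∀ i, p i = ∑ s : Finset (Fin n), if i ∈ s then w s else 0)
    (hproper : ∀ i, 0 < p i)
    (ζ : Fin n → EuclideanSpace ℝ (Fin d))
    (ζbar : EuclideanSpace ℝ (Fin d)) (hζbar : ζbar = (1 / (n : ℝ)) • ∑ i, ζ i) :
    ∑ s : Finset (Fin n), w s * ‖(∑ i ∈ s, (1 / ((n : ℝ) * p i)) • ζ i) - ζbar‖ ^ 2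
      = (1 / (n : ℝ) ^ 2) *
          ∑ i, ∑ j, (P i j - p i * p j) * ⟪(1 / p i) • ζ i, (1 / p j) • ζ j⟫ := by
  have hn0 : (n : ℝ) ≠ 0 := Nat.cast_ne_zero.mpr (by omega)
  set u : Fin n → EuclideanSpace ℝ (Fin d) := fun i => (1 / p i) • ζ i with hu
  set χ : Finset (Fin n) → Fin n → ℝ := fun s i => if i ∈ s then 1 else 0 with hχ
  -- per-pair expectation identity
  have hij : ∀ i j, (∑ s : Finset (Fin n), w s * ((χ s i - p i) * (χ s j - p j)))
      = P i j - p i * p j := by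
    intro i j
    have h1 : ∀ s : Finset (Fin n), w s * ((χ s i - p i) * (χ s j - p j))
        = ((if i ∈ s ∧ j ∈ s then w s else 0)
            - p j * (if i ∈ s then w s else 0))
          - (p i * (if j ∈ s then w s else 0)
            - p i * p j * w s) := by
      intro s
      by_cases hi : i ∈ s <;> by_cases hj : j ∈ s <;>
        simp [hχ, hi, hj] <;> ring
    rw [Finset.sum_congr rfl (fun s _ => h1 s), Finset.sum_sub_distrib,
      Finset.sum_sub_distrib, Finset.sum_sub_distrib, ← Finset.mul_sum,
      ← Finset.mul_sum, ← Finset.mul_sum, ← hP, ← hp, ← hp, hsum]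
    ring
  -- rewrite the deviation
  have key : ∀ s : Finset (Fin n),
      ((∑ i ∈ s, (1 / ((n : ℝ) * p i)) • ζ i) - ζbar)
        = ∑ i : Fin n, ((1 / (n : ℝ)) * (χ s i - p i)) • u i := by
    intro s
    have hsplit : ∑ i : Fin n, ((1 / (n : ℝ)) * (χ s i - p i)) • u i
        = (∑ i : Fin n, ((1 / (n : ℝ)) * χ s i) • u i)
          - ∑ i : Fin n, ((1 / (n : ℝ)) * p i) • u i := by
      rw [← Finset.sum_sub_distrib]
      refine Finset.sum_congr rfl fun i _ => ?_
      rw [mul_sub, sub_smul]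
    rw [hsplit]
    congr 1
    · have : ∀ i : Fin n, ((1 / (n : ℝ)) * χ s i) • u i
          = if i ∈ s then (1 / ((n : ℝ) * p i)) • ζ i else 0 := by
        intro i
        by_cases hi : i ∈ s
        · simp only [hχ, hi, if_true, mul_one, hu, smul_smul]
          congr 1
          rw [div_mul_div_comm, one_mul]
        · simp [hχ, hi]
      rw [Finset.sum_congr rfl (fun i _ => this i), Finset.sum_ite_mem,
        Finset.univ_inter]
    · rw [hζbar, Finset.smul_sum]
      refine Finset.sum_congr rfl fun i _ => ?_
      rw [hu, smul_smul]
      congr 1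
      field_simp [(hproper i).ne']
  -- expand norm squared
  have hnorm : ∀ s : Finset (Fin n),
      ‖(∑ i ∈ s, (1 / ((n : ℝ) * p i)) • ζ i) - ζbar‖ ^ 2
        = ∑ i : Fin n, ∑ j : Fin n,
            (((1 / (n : ℝ)) * (χ s i - p i)) * ((1 / (n : ℝ)) * (χ s j - p j)))
              * ⟪u i, u j⟫ := by
    intro s
    rw [← real_inner_self_eq_norm_sq, key s, sum_inner]
    refine Finset.sum_congr rfl fun i _ => ?_
    rw [inner_sum]
    refine Finset.sum_congr rfl fun j _ => ?_
    rw [real_inner_smul_left, real_inner_smul_right]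
    ring
  calc
    ∑ s : Finset (Fin n), w s * ‖(∑ i ∈ s, (1 / ((n : ℝ) * p i)) • ζ i) - ζbar‖ ^ 2
        = ∑ s : Finset (Fin n), ∑ i : Fin n, ∑ j : Fin n,
            w s * ((((1 / (n : ℝ)) * (χ s i - p i)) * ((1 / (n : ℝ)) * (χ s j - p j)))
              * ⟪u i, u j⟫) := by
          simp only [hnorm, Finset.mul_sum]
    _ = ∑ i : Fin n, ∑ j : Fin n, ∑ s : Finset (Fin n),
            w s * ((((1 / (n : ℝ)) * (χ s i - p i)) * ((1 / (n : ℝ)) * (χ s j - p j)))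
              * ⟪u i, u j⟫) := by
          rw [Finset.sum_comm]
          exact Finset.sum_congr rfl fun i _ => Finset.sum_comm
    _ = ∑ i : Fin n, ∑ j : Fin n,
            (1 / (n : ℝ) ^ 2) * ((P i j - p i * p j) * ⟪u i, u j⟫) := by
          refine Finset.sum_congr rfl fun i _ => Finset.sum_congr rfl fun j _ => ?_
          rw [← hij i j, Finset.sum_mul, Finset.mul_sum]
          exact Finset.sum_congr rfl fun s _ => by ring
    _ = (1 / (n : ℝ) ^ 2) *
          ∑ i, ∑ j, (P i j - p i * p j) * ⟪(1 / p i) • ζ i, (1 / p j) • ζ j⟫ := by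
          rw [Finset.mul_sum]
          exact Finset.sum_congr rfl fun i _ => (Finset.mul_sum ..).symm
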